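/- Any finite product C of matrices B_{n_1}, ..., B_{n_r} has the form C = [[α, iβ], [iγ, δ]] with α, β, γ, δ ∈ ℤ[u, u⁻¹] satisfying αδ + βγ = 1. -/

import Mathlib

open Matrix

/-- The balanced q-integer `[n] = (u^n - u^{-n})/(u - u⁻¹)`, where `w` is the
inverse of `u - u⁻¹`. -/
def qint {R : Type*} [CommRing R] (u : Rˣ) (w : R) (n : ℤ) : R :=
  (((u ^ n : Rˣ) : R) - ((u ^ (-n) : Rˣ) : R)) * w

/-- The matrix `B_n = [[[n], i·u^{-n}], [i·u^n, 0]]`. -/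
def Bmat {R : Type*} [CommRing R] (i : R) (u : Rˣ) (w : R) (n : ℤ) :
    Matrix (Fin 2) (Fin 2) R :=
  !![qint u w n, i * ((u ^ (-n) : Rˣ) : R); i * ((u ^ n : Rˣ) : R), 0]

section Aux
variable {R : Type*} [CommRing R] (u : Rˣ) (w : R)

lemma uzpow_mem (n : ℤ) :
    ((u ^ n : Rˣ) : R) ∈ Subring.closure {(u : R), ((u⁻¹ : Rˣ) : R)} := by
  set S := Subring.closure {(u : R), ((u⁻¹ : Rˣ) : R)} with hS
  have hu : (u : R) ∈ S := Subring.subset_closure (by simp)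
  have hv : ((u⁻¹ : Rˣ) : R) ∈ S := Subring.subset_closure (by simp)
  induction n using Int.induction_on with
  | zero => simpa using S.one_mem
  | succ n ih =>
      have h : ((u ^ ((n : ℤ) + 1) : Rˣ) : R) = ((u ^ (n : ℤ) : Rˣ) : R) * (u : R) := by
        rw [_root_.zpow_add_one]; simp
      rw [h]; exact S.mul_mem ih hu
  | pred n ih =>
      have h : ((u ^ (-(n : ℤ) - 1) : Rˣ) : R)
          = ((u ^ (-(n : ℤ)) : Rˣ) : R) * ((u⁻¹ : Rˣ) : R) := by
        rw [sub_eq_add_neg, _root_.zpow_add, _root_.zpow_neg_one]; simp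
      rw [h]; exact S.mul_mem ih hv

lemma qint_succ (hw : ((u : R) - ((u⁻¹ : Rˣ) : R)) * w = 1) (n : ℤ) :
    qint u w (n + 1) = (u : R) * qint u w n + ((u ^ (-n) : Rˣ) : R) := by
  have h1 : ((u ^ (n + 1) : Rˣ) : R) = ((u ^ n : Rˣ) : R) * (u : R) := by
    rw [_root_.zpow_add_one]; simp
  have h2 : ((u ^ (-(n + 1)) : Rˣ) : R) = ((u ^ (-n) : Rˣ) : R) * ((u⁻¹ : Rˣ) : R) := by
    have h : -(n + 1) = -n + (-1) := by ring
    rw [h, _root_.zpow_add, _root_.zpow_neg_one]; simp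
  unfold qint
  rw [h1, h2]
  linear_combination ((u ^ (-n) : Rˣ) : R) * hw

lemma qint_neg (n : ℤ) : qint u w (-n) = - qint u w n := by
  unfold qint; rw [neg_neg]; ring

lemma qint_mem (hw : ((u : R) - ((u⁻¹ : Rˣ) : R)) * w = 1) (n : ℤ) :
    qint u w n ∈ Subring.closure {(u : R), ((u⁻¹ : Rˣ) : R)} := by
  set S := Subring.closure {(u : R), ((u⁻¹ : Rˣ) : R)} with hS
  have hu : (u : R) ∈ S := Subring.subset_closure (by simp)
  induction n using Int.induction_on with
  | zero => simpa [qint] using S.zero_mem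
  | succ n ih =>
      rw [qint_succ u w hw]
      exact S.add_mem (S.mul_mem hu ih) (uzpow_mem u _)
  | pred n ih =>
      have h : (-(n : ℤ) - 1) = -((n : ℤ) + 1) := by ring
      rw [h, qint_neg]
      refine S.neg_mem ?_
      have hn' : qint u w n ∈ S := by
        have := S.neg_mem ih
        rwa [qint_neg, neg_neg] at this
      rw [qint_succ u w hw]
      exact S.add_mem (S.mul_mem hu hn') (uzpow_mem u _)

lemma zpow_mul_zpow_neg (n : ℤ) :
    ((u ^ n : Rˣ) : R) * ((u ^ (-n) : Rˣ) : R) = 1 := by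
  rw [← Units.val_mul, ← _root_.zpow_add]
  simp
end Aux

theorem stmt10 {R : Type*} [CommRing R] (i : R) (hi : i ^ 2 = -1)
    (u : Rˣ) (w : R) (hw : ((u : R) - ((u⁻¹ : Rˣ) : R)) * w = 1)
    (l : List ℤ) :
    ∃ α β γ δ : R,
      α ∈ Subring.closure {(u : R), ((u⁻¹ : Rˣ) : R)} ∧
      β ∈ Subring.closure {(u : R), ((u⁻¹ : Rˣ) : R)} ∧
      γ ∈ Subring.closure {(u : R), ((u⁻¹ : Rˣ) : R)} ∧
      δ ∈ Subring.closure {(u : R), ((u⁻¹ : Rˣ) : R)} ∧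
      (l.map (Bmat i u w)).prod = !![α, i * β; i * γ, δ] ∧
      α * δ + β * γ = 1 := by
  set S := Subring.closure {(u : R), ((u⁻¹ : Rˣ) : R)} with hS
  induction l with
  | nil =>
      refine ⟨1, 0, 0, 1, S.one_mem, S.zero_mem, S.zero_mem, S.one_mem, ?_, by ring⟩
      simp [Matrix.one_fin_two]
  | cons n l ih =>
      obtain ⟨α, β, γ, δ, hα, hβ, hγ, hδ, hprod, hdet⟩ := ih
      refine ⟨qint u w n * α - ((u ^ (-n) : Rˣ) : R) * γ,
              qint u w n * β + ((u ^ (-n) : Rˣ) : R) * δ,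
              ((u ^ n : Rˣ) : R) * α,
              -(((u ^ n : Rˣ) : R) * β), ?_, ?_, ?_, ?_, ?_, ?_⟩
      · exact S.sub_mem (S.mul_mem (qint_mem u w hw n) hα) (S.mul_mem (uzpow_mem u _) hγ)
      · exact S.add_mem (S.mul_mem (qint_mem u w hw n) hβ) (S.mul_mem (uzpow_mem u _) hδ)
      · exact S.mul_mem (uzpow_mem u _) hα
      · exact S.neg_mem (S.mul_mem (uzpow_mem u _) hβ)
      · rw [List.map_cons, List.prod_cons, hprod, Bmat, Matrix.mul_fin_two]
        have e1 : qint u w n * α + i * ((u ^ (-n) : Rˣ) : R) * (i * γ)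
            = qint u w n * α - ((u ^ (-n) : Rˣ) : R) * γ := by
          linear_combination ((u ^ (-n) : Rˣ) : R) * γ * hi
        have e2 : qint u w n * (i * β) + i * ((u ^ (-n) : Rˣ) : R) * δ
            = i * (qint u w n * β + ((u ^ (-n) : Rˣ) : R) * δ) := by ring
        have e3 : i * ((u ^ n : Rˣ) : R) * α + 0 * (i * γ)
            = i * (((u ^ n : Rˣ) : R) * α) := by ring
        have e4 : i * ((u ^ n : Rˣ) : R) * (i * β) + 0 * δ
            = -(((u ^ n : Rˣ) : R) * β) := by
          linear_combination ((u ^ n : Rˣ) : R) * β * hi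
        rw [e1, e2, e3, e4]
      · linear_combination ((u ^ n : Rˣ) : R) * ((u ^ (-n) : Rˣ) : R) * hdet
          + zpow_mul_zpow_neg u n
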